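/- (Closeness of the modified energy to the quadratic part.) Assume |ψ₁(ξ)| ≤ c₀ and |φ(ξ)| ≤ c₀ for all ξ ∈ ℝ. Then for all q, q̇ ∈ ℂ^d and 0 < h ≤ 1: |ℋ(q, q̇) − (1/2)‖Ω q‖² − (1/2)‖q̇‖²| ≤ (C̆ + Ĉ h²)‖q‖², where C̆ = (1/2) c₀² ‖A‖ and Ĉ = (1/8) c₀⁴ ‖A‖², ‖A‖ being the operator norm. -/

import Mathlib

open scoped BigOperators

/-- `sinc ξ = sin ξ / ξ` with `sinc 0 = 1`. -/
noncomputable def sinc (x : ℝ) : ℝ := if x = 0 then 1 else Real.sin x / x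

/-- Entrywise (diagonal-matrix) action of a real function family on `ℂ^d`. -/
noncomputable def dOp {d : ℕ} (f : Fin d → ℝ) (q : EuclideanSpace ℂ (Fin d)) :
    EuclideanSpace ℂ (Fin d) := WithLp.toLp 2 (fun i => (f i : ℂ) * q i)

/-- Position update of the trigonometric integrator for the linear force `g(q) = -A q`:
`q_{n+1} = cos(hΩ) q_n + h sinc(hΩ) q̇_n + ½h² sinc(hΩ) Ψ₁ g(Φ q_n)`. -/
noncomputable def trigStepQ {d : ℕ} (h : ℝ) (ω : Fin d → ℝ) (ψ₁ φ : ℝ → ℝ)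
    (A : EuclideanSpace ℂ (Fin d) →L[ℂ] EuclideanSpace ℂ (Fin d))
    (q p : EuclideanSpace ℂ (Fin d)) : EuclideanSpace ℂ (Fin d) :=
  dOp (fun i => Real.cos (h * ω i)) q + h • dOp (fun i => sinc (h * ω i)) p
    + (h ^ 2 / 2) • dOp (fun i => sinc (h * ω i))
        (dOp (fun i => ψ₁ (h * ω i)) (-(A (dOp (fun i => φ (h * ω i)) q))))

/-- Velocity update of the trigonometric integrator for the linear force `g(q) = -A q`:
`q̇_{n+1} = -Ω sin(hΩ) q_n + cos(hΩ) q̇_n + ½h (cos(hΩ) Ψ₁ g(Φ q_n) + Ψ₁ g(Φ q_{n+1}))`. -/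
noncomputable def trigStepP {d : ℕ} (h : ℝ) (ω : Fin d → ℝ) (ψ₁ φ : ℝ → ℝ)
    (A : EuclideanSpace ℂ (Fin d) →L[ℂ] EuclideanSpace ℂ (Fin d))
    (q p : EuclideanSpace ℂ (Fin d)) : EuclideanSpace ℂ (Fin d) :=
  -(dOp (fun i => ω i * Real.sin (h * ω i)) q) + dOp (fun i => Real.cos (h * ω i)) p
    + (h / 2) • (dOp (fun i => Real.cos (h * ω i))
          (dOp (fun i => ψ₁ (h * ω i)) (-(A (dOp (fun i => φ (h * ω i)) q))))
        + dOp (fun i => ψ₁ (h * ω i))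
            (-(A (dOp (fun i => φ (h * ω i)) (trigStepQ h ω ψ₁ φ A q p)))))

/-- The modified energy
`ℋ(q,q̇) = ½‖Ωq‖² + ½‖q̇‖² + ½ Re((cos(hΩ)Φq)* A Φq) − ⅛h²‖Ψ₁ A Φq‖²`. -/
noncomputable def modEnergy {d : ℕ} (h : ℝ) (ω : Fin d → ℝ) (ψ₁ φ : ℝ → ℝ)
    (A : EuclideanSpace ℂ (Fin d) →L[ℂ] EuclideanSpace ℂ (Fin d))
    (q p : EuclideanSpace ℂ (Fin d)) : ℝ :=
  (1 / 2) * ‖dOp ω q‖ ^ 2 + (1 / 2) * ‖p‖ ^ 2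
    + (1 / 2) * (inner (𝕜 := ℂ) (dOp (fun i => Real.cos (h * ω i)) (dOp (fun i => φ (h * ω i)) q))
        (A (dOp (fun i => φ (h * ω i)) q))).re
    - (1 / 8) * h ^ 2 * ‖dOp (fun i => ψ₁ (h * ω i)) (A (dOp (fun i => φ (h * ω i)) q))‖ ^ 2

/-- The total energy `H(q,q̇) = ½‖Ωq‖² + ½‖q̇‖² + ½ q* A q` of `q̈ = -Ω²q - Aq`. -/
noncomputable def energy {d : ℕ} (ω : Fin d → ℝ)
    (A : EuclideanSpace ℂ (Fin d) →L[ℂ] EuclideanSpace ℂ (Fin d))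
    (q p : EuclideanSpace ℂ (Fin d)) : ℝ :=
  (1 / 2) * ‖dOp ω q‖ ^ 2 + (1 / 2) * ‖p‖ ^ 2 + (1 / 2) * (inner (𝕜 := ℂ) q (A q)).re

lemma dOp_norm_le {d : ℕ} (f : Fin d → ℝ) (c : ℝ) (hc : 0 ≤ c)
    (hf : ∀ i, |f i| ≤ c) (q : EuclideanSpace ℂ (Fin d)) :
    ‖dOp f q‖ ≤ c * ‖q‖ := by
  have h1 : ‖dOp f q‖ ^ 2 ≤ (c * ‖q‖) ^ 2 := by
    rw [EuclideanSpace.norm_eq, EuclideanSpace.norm_eq, Real.sq_sqrt (by positivity),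
      mul_pow, Real.sq_sqrt (by positivity), Finset.mul_sum]
    apply Finset.sum_le_sum
    intro i _
    have : ‖dOp f q i‖ = |f i| * ‖q i‖ := by
      simp [dOp, norm_mul, Complex.norm_real]
    rw [this, mul_pow]
    have := hf i
    have h2 : |f i| ^ 2 ≤ c ^ 2 := by
      apply sq_le_sq' <;> nlinarith [abs_nonneg (f i)]
    nlinarith [sq_nonneg ‖q i‖, norm_nonneg (q i)]
  nlinarith [norm_nonneg (dOp f q), norm_nonneg q, mul_nonneg hc (norm_nonneg q)]

/-- Lemma 1, first estimate: the modified energy is close to the quadratic part: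
`|ℋ(q,q̇) − ½‖Ωq‖² − ½‖q̇‖²| ≤ (C̆ + Ĉh²)‖q‖²` with `C̆ = ½c₀²‖A‖`, `Ĉ = ⅛c₀⁴‖A‖²`. -/
theorem modified_energy_close_to_quadratic_part {d : ℕ} (h : ℝ) (hh0 : 0 < h) (hh1 : h ≤ 1)
    (ω : Fin d → ℝ) (hω : ∀ i, 0 ≤ ω i) (ψ₁ φ : ℝ → ℝ) (c₀ : ℝ)
    (hψ : ∀ ξ : ℝ, |ψ₁ ξ| ≤ c₀) (hφ : ∀ ξ : ℝ, |φ ξ| ≤ c₀)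
    (A : EuclideanSpace ℂ (Fin d) →L[ℂ] EuclideanSpace ℂ (Fin d))
    (hA : IsSelfAdjoint A) :
    ∀ q p : EuclideanSpace ℂ (Fin d),
      |modEnergy h ω ψ₁ φ A q p - (1 / 2) * ‖dOp ω q‖ ^ 2 - (1 / 2) * ‖p‖ ^ 2|
        ≤ ((1 / 2) * c₀ ^ 2 * ‖A‖ + (1 / 8) * c₀ ^ 4 * ‖A‖ ^ 2 * h ^ 2) * ‖q‖ ^ 2 := by
  intro q p
  have hc0 : 0 ≤ c₀ := le_trans (abs_nonneg _) (hψ 0)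
  set Φq := dOp (fun i => φ (h * ω i)) q with hΦq
  have hΦ : ‖Φq‖ ≤ c₀ * ‖q‖ := dOp_norm_le _ c₀ hc0 (fun i => hφ _) q
  have hcos : ‖dOp (fun i => Real.cos (h * ω i)) Φq‖ ≤ 1 * ‖Φq‖ :=
    dOp_norm_le _ 1 one_pos.le (fun i => Real.abs_cos_le_one _) Φq
  have hterm1 : |(inner (𝕜 := ℂ) (dOp (fun i => Real.cos (h * ω i)) Φq) (A Φq)).re|
      ≤ c₀ ^ 2 * ‖A‖ * ‖q‖ ^ 2 := by
    calc |(inner (𝕜 := ℂ) (dOp (fun i => Real.cos (h * ω i)) Φq) (A Φq)).re|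
        ≤ ‖(inner (𝕜 := ℂ) (dOp (fun i => Real.cos (h * ω i)) Φq) (A Φq))‖ :=
          Complex.abs_re_le_norm _
      _ ≤ ‖dOp (fun i => Real.cos (h * ω i)) Φq‖ * ‖A Φq‖ := norm_inner_le_norm _ _
      _ ≤ (1 * ‖Φq‖) * (‖A‖ * ‖Φq‖) :=
          mul_le_mul hcos (A.le_opNorm _) (norm_nonneg _) (by positivity)
      _ ≤ (1 * (c₀ * ‖q‖)) * (‖A‖ * (c₀ * ‖q‖)) := by
          apply mul_le_mul
          · linarith
          · exact mul_le_mul_of_nonneg_left hΦ (norm_nonneg _)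
          · positivity
          · positivity
      _ = c₀ ^ 2 * ‖A‖ * ‖q‖ ^ 2 := by ring
  have hterm2 : ‖dOp (fun i => ψ₁ (h * ω i)) (A Φq)‖ ^ 2
      ≤ c₀ ^ 4 * ‖A‖ ^ 2 * ‖q‖ ^ 2 := by
    have h1 : ‖dOp (fun i => ψ₁ (h * ω i)) (A Φq)‖ ≤ c₀ * ‖A Φq‖ :=
      dOp_norm_le _ c₀ hc0 (fun i => hψ _) _
    have h2 : ‖A Φq‖ ≤ ‖A‖ * (c₀ * ‖q‖) := le_trans (A.le_opNorm _)
      (mul_le_mul_of_nonneg_left hΦ (norm_nonneg _))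
    have h3 : ‖dOp (fun i => ψ₁ (h * ω i)) (A Φq)‖ ≤ c₀ * (‖A‖ * (c₀ * ‖q‖)) :=
      le_trans h1 (mul_le_mul_of_nonneg_left h2 hc0)
    nlinarith [norm_nonneg (dOp (fun i => ψ₁ (h * ω i)) (A Φq)),
      mul_nonneg hc0 (mul_nonneg (norm_nonneg A) (mul_nonneg hc0 (norm_nonneg q)))]
  have hdiff : modEnergy h ω ψ₁ φ A q p - (1 / 2) * ‖dOp ω q‖ ^ 2 - (1 / 2) * ‖p‖ ^ 2
      = (1 / 2) * (inner (𝕜 := ℂ) (dOp (fun i => Real.cos (h * ω i)) Φq) (A Φq)).re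
        - (1 / 8) * h ^ 2 * ‖dOp (fun i => ψ₁ (h * ω i)) (A Φq)‖ ^ 2 := by
    simp only [modEnergy, hΦq]; ring
  rw [hdiff]
  have hh2 : h ^ 2 * ‖dOp (fun i => ψ₁ (h * ω i)) (A Φq)‖ ^ 2
      ≤ h ^ 2 * (c₀ ^ 4 * ‖A‖ ^ 2 * ‖q‖ ^ 2) :=
    mul_le_mul_of_nonneg_left hterm2 (by positivity)
  have habs := abs_sub (1 / 2 * (inner (𝕜 := ℂ)
    (dOp (fun i => Real.cos (h * ω i)) Φq) (A Φq)).re)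
    (1 / 8 * h ^ 2 * ‖dOp (fun i => ψ₁ (h * ω i)) (A Φq)‖ ^ 2)
  calc |1 / 2 * (inner (𝕜 := ℂ) (dOp (fun i => Real.cos (h * ω i)) Φq) (A Φq)).re
        - 1 / 8 * h ^ 2 * ‖dOp (fun i => ψ₁ (h * ω i)) (A Φq)‖ ^ 2|
      ≤ 1 / 2 * |(inner (𝕜 := ℂ) (dOp (fun i => Real.cos (h * ω i)) Φq) (A Φq)).re|
        + 1 / 8 * (h ^ 2 * ‖dOp (fun i => ψ₁ (h * ω i)) (A Φq)‖ ^ 2) := by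
        have h8 : |1 / 8 * h ^ 2 * ‖dOp (fun i => ψ₁ (h * ω i)) (A Φq)‖ ^ 2|
            = 1 / 8 * (h ^ 2 * ‖dOp (fun i => ψ₁ (h * ω i)) (A Φq)‖ ^ 2) := by
          rw [abs_of_nonneg (by positivity)]; ring
        have h5 : |1 / 2 * (inner (𝕜 := ℂ)
            (dOp (fun i => Real.cos (h * ω i)) Φq) (A Φq)).re|
            = 1 / 2 * |(inner (𝕜 := ℂ)
            (dOp (fun i => Real.cos (h * ω i)) Φq) (A Φq)).re| := by
          rw [abs_mul, abs_of_nonneg (by norm_num : (0:ℝ) ≤ 1/2)]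
        linarith
    _ ≤ 1 / 2 * (c₀ ^ 2 * ‖A‖ * ‖q‖ ^ 2)
        + 1 / 8 * (h ^ 2 * (c₀ ^ 4 * ‖A‖ ^ 2 * ‖q‖ ^ 2)) := by
        gcongr
    _ = (1 / 2 * c₀ ^ 2 * ‖A‖ + 1 / 8 * c₀ ^ 4 * ‖A‖ ^ 2 * h ^ 2) * ‖q‖ ^ 2 := by ring
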